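/- Let G be an oligomorphic group of permutations of a set E. If r and s are G-invariant setoids on E all of whose equivalence classes are finite, then every equivalence class of the join r ⊔ s (taken in the lattice Setoid E) is finite. -/

import Mathlib

/-- The orbit setoid of a permutation group `G ≤ Perm E` acting on the
`n`-element finite subsets of `E`. -/
def permSetoid {E : Type*} (G : Subgroup (Equiv.Perm E)) (n : ℕ) :
    Setoid {s : Set E // s.Finite ∧ s.ncard = n} where
  r s t := ∃ g ∈ G, g '' s.1 = t.1
  iseqv := by
    constructor
    · exact fun s => ⟨1, G.one_mem, by simp⟩
    · rintro s t ⟨g, hg, h⟩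
      refine ⟨g⁻¹, G.inv_mem hg, ?_⟩
      rw [← h, ← Set.image_comp]
      ext x; simp
    · rintro s t u ⟨g, hg, h⟩ ⟨g', hg', h'⟩
      refine ⟨g' * g, G.mul_mem hg' hg, ?_⟩
      rw [← h', ← h, ← Set.image_comp]
      ext x; simp

/-- A setoid (equivalence relation) on `E` is `G`-invariant — i.e. a block
system for `G` — if its relation is preserved by every element of `G`. -/
def GInvariant {E : Type*} (G : Subgroup (Equiv.Perm E)) (r : Setoid E) : Prop :=
  ∀ g ∈ G, ∀ x y : E, r.r x y ↔ r.r (g x) (g y)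


section aux
variable {E : Type*} (r s : Setoid E)

def stepRel (a b : E) : Prop := r.r a b ∨ s.r a b

def relN : ℕ → E → E → Prop
  | 0, a, b => b = a
  | n+1, a, b => ∃ z, relN n a z ∧ stepRel r s z b

variable {r s}

theorem stepRel_refl (a : E) : stepRel r s a a := Or.inl (r.refl a)

theorem stepRel_symm {a b : E} (h : stepRel r s a b) : stepRel r s b a :=
  h.imp (r.symm) (s.symm)

theorem relN_cons {a z b : E} {n : ℕ} (h : stepRel r s a z) (h2 : relN r s n z b) :
    relN r s (n+1) a b := by
  induction n generalizing b with
  | zero => exact ⟨a, rfl, h2 ▸ h⟩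
  | succ n ih =>
    obtain ⟨w, hw, hwb⟩ := h2
    exact ⟨w, ih hw, hwb⟩

theorem relN_symm {a b : E} {n : ℕ} (h : relN r s n a b) : relN r s n b a := by
  induction n generalizing b with
  | zero => exact h.symm
  | succ n ih =>
    obtain ⟨z, hz, hzb⟩ := h
    exact relN_cons (stepRel_symm hzb) (ih hz)

theorem relN_trans {a b c : E} {m n : ℕ} (h1 : relN r s m a b) (h2 : relN r s n b c) :
    relN r s (m+n) a c := by
  induction n generalizing c with
  | zero => exact h2 ▸ h1
  | succ n ih =>
    obtain ⟨z, hz, hzc⟩ := h2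
    exact ⟨z, ih hz, hzc⟩

theorem relN_finite (hrfin : ∀ x : E, {y | r.r x y}.Finite)
    (hsfin : ∀ x : E, {y | s.r x y}.Finite) (n : ℕ) (x : E) :
    {y | relN r s n x y}.Finite := by
  induction n with
  | zero => exact (Set.finite_singleton x).subset (fun y hy => hy)
  | succ n ih =>
    have : {y | relN r s (n+1) x y} ⊆
        ⋃ z ∈ {y | relN r s n x y}, ({w | r.r z w} ∪ {w | s.r z w}) := by
      rintro y ⟨z, hz, hzy⟩
      exact Set.mem_biUnion hz (by exact hzy)
    exact (Set.Finite.biUnion ih (fun z _ => (hrfin z).union (hsfin z))).subset this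

theorem relN_sup {x y : E} {n : ℕ} (h : relN r s n x y) : (r ⊔ s).r x y := by
  induction n generalizing y with
  | zero => exact h ▸ (r ⊔ s).refl x
  | succ n ih =>
    obtain ⟨z, hz, hzy⟩ := h
    refine (r ⊔ s).trans (ih hz) ?_
    rcases hzy with h' | h'
    · exact (le_sup_left : r ≤ r ⊔ s) h'
    · exact (le_sup_right : s ≤ r ⊔ s) h'

theorem eqvGen_relN {x y : E} (h' : Relation.EqvGen (fun a b => r.r a b ∨ s.r a b) x y) :
    ∃ n, relN r s n x y := by
  induction h' with
  | rel a b hab => exact ⟨1, a, rfl, hab⟩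
  | refl a => exact ⟨0, rfl⟩
  | symm a b _ ih => obtain ⟨n, hn⟩ := ih; exact ⟨n, relN_symm hn⟩
  | trans a b c _ _ ih1 ih2 =>
    obtain ⟨m, hm⟩ := ih1; obtain ⟨n, hn⟩ := ih2
    exact ⟨m + n, relN_trans hm hn⟩

theorem sup_relN {x y : E} (h : (r ⊔ s).r x y) : ∃ n, relN r s n x y := by
  apply eqvGen_relN
  have := Setoid.sup_eq_eqvGen r s
  rw [this] at h
  exact h

end aux

theorem relN_inv {E : Type*} {G : Subgroup (Equiv.Perm E)} {r s : Setoid E}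
    (hr : GInvariant G r) (hs : GInvariant G s)
    {g : Equiv.Perm E} (hg : g ∈ G) {n : ℕ} {a b : E} (h : relN r s n a b) :
    relN r s n (g a) (g b) := by
  induction n generalizing b with
  | zero => exact congrArg g h
  | succ n ih =>
    obtain ⟨z, hz, hzb⟩ := h
    exact ⟨g z, ih hz, hzb.imp (fun h' => (hr g hg z b).mp h') (fun h' => (hs g hg z b).mp h')⟩


/-- If `G` is oligomorphic and `r`, `s` are `G`-invariant setoids on `E` with
all equivalence classes finite, then all equivalence classes of the join
`r ⊔ s` are finite. -/
theorem join_of_finite_block_systems {E : Type*} (G : Subgroup (Equiv.Perm E))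
    (holig : ∀ n, Finite (Quotient (permSetoid G n)))
    (r s : Setoid E) (hr : GInvariant G r) (hs : GInvariant G s)
    (hrfin : ∀ x : E, {y | r.r x y}.Finite)
    (hsfin : ∀ x : E, {y | s.r x y}.Finite) :
    ∀ x : E, {y | (r ⊔ s).r x y}.Finite := by
  classical
  intro x
  by_contra hinf
  set C : Set E := {y | (r ⊔ s).r x y} with hC
  -- distance from x
  set d : E → ℕ := fun y => sInf {n | relN r s n x y} with hd
  have hd_mem : ∀ y, (r ⊔ s).r x y → relN r s (d y) x y := fun y hy =>
    Nat.sInf_mem (sup_relN hy)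
  have hd_min : ∀ y m, m < d y → ¬ relN r s m x y := fun y m hm =>
    Nat.notMem_of_lt_sInf hm
  have hd_le : ∀ y m, relN r s m x y → d y ≤ m := fun y m hm => Nat.sInf_le hm
  set D : Set ℕ := d '' (C \ {x}) with hD
  -- choose witnesses for each value in D
  have hchoice : ∀ v : ↥D, ∃ y, ((r ⊔ s).r x y ∧ y ≠ x) ∧ d y = v.1 := by
    rintro ⟨v, hv⟩
    obtain ⟨y, hy, hdy⟩ := hv
    exact ⟨y, ⟨hy.1, by simpa using hy.2⟩, hdy⟩
  choose yf hyf hdyf using hchoice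
  have hne : ∀ v : ↥D, x ≠ yf v := fun v => Ne.symm (hyf v).2
  -- the pair map into orbits of 2-element sets
  have hpair : ∀ v : ↥D, (({x, yf v} : Set E).Finite ∧ ({x, yf v} : Set E).ncard = 2) :=
    fun v => ⟨(Set.finite_singleton (yf v)).insert x, Set.ncard_pair (hne v)⟩
  set Φ : ↥D → Quotient (permSetoid G 2) :=
    fun v => Quotient.mk (permSetoid G 2) ⟨{x, yf v}, hpair v⟩ with hΦ
  have hinj : Function.Injective Φ := by
    intro v w h
    have hrel := Quotient.exact h
    obtain ⟨g, hg, hgim⟩ := hrel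
    have hgim' : ⇑g '' ({x, yf v} : Set E) = ({x, yf w} : Set E) := hgim
    -- transported facts
    have hmemx : g x ∈ ({x, yf w} : Set E) := by
      rw [← hgim']; exact Set.mem_image_of_mem g (by simp)
    have hmemy : g (yf v) ∈ ({x, yf w} : Set E) := by
      rw [← hgim']; exact Set.mem_image_of_mem g (by simp)
    have hgne : g x ≠ g (yf v) := fun hEq => hne v (g.injective hEq)
    have hrelv : relN r s (v.1) (g x) (g (yf v)) := by
      have := relN_inv hr hs hg (hd_mem (yf v) (hyf v).1)
      rwa [hdyf v] at this
    have hminv : ∀ m < v.1, ¬ relN r s m (g x) (g (yf v)) := by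
      intro m hm hrel'
      have := relN_inv hr hs (G.inv_mem hg) hrel'
      simp only [Equiv.Perm.inv_def, Equiv.symm_apply_apply] at this
      exact hd_min (yf v) m (by rw [hdyf v]; exact hm) this
    have key : ∀ a b : E, a ∈ ({x, yf w} : Set E) → b ∈ ({x, yf w} : Set E) → a ≠ b →
        relN r s v.1 a b → (∀ m < v.1, ¬ relN r s m a b) → v.1 = w.1 := by
      intro a b ha hb hab hrel1 hmin1
      have hrelw : relN r s w.1 x (yf w) := by
        have := hd_mem (yf w) (hyf w).1
        rwa [hdyf w] at this
      rcases ha with ha | ha <;> rcases hb with hb | hb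
      · exact absurd (ha.trans hb.symm) hab
      · subst ha; subst hb
        have h1 : w.1 ≤ v.1 := by
          have := hd_le (yf w) v.1 hrel1
          rwa [hdyf w] at this
        have h2 : ¬ w.1 < v.1 := fun hlt => hmin1 w.1 hlt hrelw
        omega
      · -- a = yf w, b = x
        subst ha; subst hb
        have h1 : w.1 ≤ v.1 := by
          have := hd_le (yf w) v.1 (relN_symm hrel1)
          rwa [hdyf w] at this
        have h2 : ¬ w.1 < v.1 := fun hlt => hmin1 w.1 hlt (relN_symm hrelw)
        omega
      · exact absurd (ha.trans hb.symm) hab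
    exact Subtype.ext (key (g x) (g (yf v)) hmemx hmemy hgne hrelv hminv)
  have hDfin : D.Finite := by
    have : Finite ↥D := Finite.of_injective Φ hinj
    exact Set.finite_coe_iff.mp this
  -- C ⊆ {x} ∪ ⋃ v ∈ D, ball v, which is finite
  have hCsub : C ⊆ insert x (⋃ v ∈ D, {y | relN r s v x y}) := by
    intro y hy
    by_cases hyx : y = x
    · subst hyx; exact Set.mem_insert y _
    · refine Set.mem_insert_of_mem x ?_
      have hyD : d y ∈ D := ⟨y, ⟨hy, hyx⟩, rfl⟩
      exact Set.mem_biUnion hyD (hd_mem y hy)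
  exact hinf (((hDfin.biUnion (fun v _ => relN_finite hrfin hsfin v x)).insert x).subset hCsub)
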